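/- Explicit second consistency measure: let P : V → S be the linear map determined by b(P v, σ) = ⟪v, E σ⟫, assume b(u, σ) = ⟪u, E σ⟫ for all u ∈ S ∩ V, σ ∈ S, let Π_V be the orthogonal projection of X onto V, and let Cstab := sup_{v ∈ V, ‖v‖ = 1} ‖P v‖. Then the smallest constant δ_S such that for all s ∈ S, sup_{σ ∈ S, σ ≠ 0} (b(s,σ) − ⟪Π_V s, E σ⟫) / ‖b(·,σ)‖_{S'} ≤ δ_S ‖s − Π_V s‖ exists and is finite, and the quasi-optimality constant satisfies max{Cstab, δ_S} ≤ Cqopt ≤ √(Cstab² + δ_S²). -/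

import Mathlib

open scoped RealInnerProductSpace

set_option maxHeartbeats 1000000

/-- Kato-type lemma: if `B` is a (pointwise) idempotent linear map on a real inner product
space with `‖B x‖ ≤ M ‖x‖` for all `x`, where `M ≥ 1`, then `‖x - B x‖ ≤ M ‖x‖`. -/
lemma kato_idempotent_bound {X : Type*} [NormedAddCommGroup X] [InnerProductSpace ℝ X]
    (B : X →ₗ[ℝ] X) (M : ℝ) (hM : 1 ≤ M) (hidem : ∀ x, B (B x) = B x)
    (hbd : ∀ x, ‖B x‖ ≤ M * ‖x‖) : ∀ x, ‖x - B x‖ ≤ M * ‖x‖ := by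
  intro x
  have hM0 : (0:ℝ) ≤ M := le_trans zero_le_one hM
  set u := B x with hu
  set v := x - B x with hv
  have hx : x = u + v := by rw [hu, hv]; abel
  have hBu : B u = u := hidem x
  have hBv0 : B v = 0 := by
    rw [hv, map_sub, hidem x, sub_self]
  have key : ∀ t : ℝ, ‖u‖ ≤ M * ‖u + t • v‖ := by
    intro t
    have hB : B (u + t • v) = u := by
      rw [map_add, map_smul, hBu, hBv0, smul_zero, add_zero]
    calc ‖u‖ = ‖B (u + t • v)‖ := by rw [hB]
      _ ≤ M * ‖u + t • v‖ := hbd _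
  have expand : ∀ t : ℝ, ‖u + t • v‖ ^ 2 = ‖u‖ ^ 2 + 2 * t * ⟪u, v⟫ + t ^ 2 * ‖v‖ ^ 2 := by
    intro t
    rw [norm_add_sq_real, real_inner_smul_right, norm_smul, Real.norm_eq_abs, mul_pow, sq_abs]
    ring
  set p : ℝ := ⟪u, v⟫ with hp
  have hsq : ∀ t : ℝ, ‖u‖ ^ 2 ≤ M ^ 2 * ‖u + t • v‖ ^ 2 := by
    intro t
    have hkey := key t
    have h2 : (0:ℝ) ≤ M * ‖u + t • v‖ := le_trans (norm_nonneg u) hkey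
    nlinarith [hkey, norm_nonneg u]
  have quad : ∀ t : ℝ, 0 ≤ (M ^ 2 * ‖v‖ ^ 2) * (t * t) + (2 * M ^ 2 * p) * t
      + ((M ^ 2 - 1) * ‖u‖ ^ 2) := by
    intro t
    have h1 := hsq t
    rw [expand t] at h1
    nlinarith [h1]
  have hdisc := discrim_le_zero quad
  rw [discrim] at hdisc
  -- hdisc : (2*M^2*p)^2 - 4*(M^2*‖v‖^2)*((M^2-1)*‖u‖^2) ≤ 0
  have hM2 : (1:ℝ) ≤ M ^ 2 := by nlinarith
  have hy : (0:ℝ) ≤ M ^ 2 * ‖u‖ ^ 2 + (M ^ 2 - 1) * ‖v‖ ^ 2 := by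
    nlinarith [sq_nonneg ‖u‖, sq_nonneg ‖v‖]
  have hG : (0:ℝ) ≤ M ^ 2 * ‖u‖ ^ 2 + (M ^ 2 - 1) * ‖v‖ ^ 2 + 2 * M ^ 2 * p := by
    nlinarith [hdisc, hy, sq_nonneg (M ^ 2 * ‖u‖ ^ 2 - (M ^ 2 - 1) * ‖v‖ ^ 2)]
  have hxn : ‖x‖ ^ 2 = ‖u‖ ^ 2 + 2 * p + ‖v‖ ^ 2 := by
    rw [hx, norm_add_sq_real, hp]
  have hfinal2 : ‖v‖ ^ 2 ≤ (M * ‖x‖) ^ 2 := by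
    rw [mul_pow]
    nlinarith [hG, hxn]
  have h2 : (0:ℝ) ≤ M * ‖x‖ := mul_nonneg hM0 (norm_nonneg x)
  calc ‖v‖ = Real.sqrt (‖v‖ ^ 2) := (Real.sqrt_sq (norm_nonneg v)).symm
    _ ≤ Real.sqrt ((M * ‖x‖) ^ 2) := Real.sqrt_le_sqrt hfinal2
    _ = M * ‖x‖ := Real.sqrt_sq h2

theorem explicit_second_consistency_measure
    {X : Type*} [NormedAddCommGroup X] [InnerProductSpace ℝ X] [CompleteSpace X]
    (V S : Submodule ℝ X) [CompleteSpace V] [FiniteDimensional ℝ S]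
    (hSne : S ≠ ⊥) (hsum : V ⊔ S = ⊤)
    (b : S →ₗ[ℝ] S →ₗ[ℝ] ℝ) (hb : ∀ s : S, (∀ σ : S, b s σ = 0) → s = 0)
    (E : S →ₗ[ℝ] V)
    (P : V →ₗ[ℝ] S)
    (hP : ∀ (v : V) (σ : S), b (P v) σ = ⟪(v : X), ((E σ : V) : X)⟫)
    (hcons : ∀ u : S, (u : X) ∈ V → ∀ σ : S, b u σ = ⟪(u : X), ((E σ : V) : X)⟫)
    (Cstab : ℝ)
    (hCstab : Cstab = sSup {r : ℝ | ∃ v : V, ‖(v : X)‖ = 1 ∧ r = ‖(P v : X)‖})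
    (Cqopt : ℝ)
    (hCqopt : IsLeast {C : ℝ | ∀ v : V,
        ‖(v : X) - (P v : X)‖ ≤ C * Metric.infDist (v : X) (S : Set X)} Cqopt) :
    ∃ δS : ℝ,
      IsLeast {d : ℝ | 0 ≤ d ∧ ∀ s : S,
          sSup {r : ℝ | ∃ σ : S, σ ≠ 0 ∧
            r = (b s σ - ⟪((Submodule.orthogonalProjectionOnto V (s : X) : X)), ((E σ : V) : X)⟫) /
                sSup {c : ℝ | ∃ s' : S, ‖s'‖ = 1 ∧ c = b s' σ}} ≤
            d * ‖(s : X) - (Submodule.orthogonalProjectionOnto V (s : X) : X)‖} δS ∧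
      max Cstab δS ≤ Cqopt ∧ Cqopt ≤ Real.sqrt (Cstab ^ 2 + δS ^ 2) := by
  obtain ⟨CqMem, CqLB⟩ := hCqopt
  -- the operator T = P ∘ Π_V as a linear map on X
  set T : X →ₗ[ℝ] X :=
    S.subtype.comp (P.comp ((Submodule.orthogonalProjectionOnto V : X →L[ℝ] V) : X →ₗ[ℝ] V)) with hTdef
  have hT : ∀ x : X, T x = ((P (Submodule.orthogonalProjectionOnto V x) : S) : X) := fun _ => rfl
  have hTS : ∀ x : X, T x ∈ S := fun x => Submodule.coe_mem _
  have hTV : ∀ v : V, T (v : X) = ((P v : S) : X) := by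
    intro v; rw [hT, Submodule.orthogonalProjectionOnto_mem_subspace_eq_self]
  -- T fixes S ∩ V
  have hTfix : ∀ u : X, u ∈ S → u ∈ V → T u = u := by
    intro u hS hV
    have hproj : Submodule.orthogonalProjectionOnto V u = ⟨u, hV⟩ := by
      apply Subtype.ext
      exact Submodule.starProjection_eq_self_iff.2 hV
    have hPeq : P ⟨u, hV⟩ = ⟨u, hS⟩ := by
      have hz : ∀ σ : S, b (P ⟨u, hV⟩ - ⟨u, hS⟩) σ = 0 := by
        intro σ
        rw [map_sub, LinearMap.sub_apply, hP ⟨u, hV⟩ σ, hcons ⟨u, hS⟩ hV σ, sub_self]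
      exact sub_eq_zero.1 (hb _ hz)
    rw [hT, hproj, hPeq]
  -- construction of the linear "lift" J : X → X with J x ∈ S and x - J x ∈ V
  set q : X →ₗ[ℝ] X :=
    LinearMap.id - V.subtype.comp ((Submodule.orthogonalProjectionOnto V : X →L[ℝ] V) : X →ₗ[ℝ] V) with hqdef
  have hq : ∀ x : X, q x = x - ((Submodule.orthogonalProjectionOnto V x : V) : X) := fun _ => rfl
  have hqzero : ∀ x : X, x ∈ V → q x = 0 := by
    intro x hx
    rw [hq, sub_eq_zero, eq_comm]
    exact Submodule.starProjection_eq_self_iff.2 hx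
  set φ : S →ₗ[ℝ] X := q.comp S.subtype with hφdef
  have hφ : ∀ s : S, φ s = q (s : X) := fun _ => rfl
  have hsurj : ∀ x : X, q x ∈ LinearMap.range φ := by
    intro x
    have hxtop : x ∈ V ⊔ S := by rw [hsum]; trivial
    obtain ⟨v₁, hv₁, s₁, hs₁, hx₁⟩ := Submodule.mem_sup.1 hxtop
    refine ⟨⟨s₁, hs₁⟩, ?_⟩
    rw [hφ]
    have h1 : q x = q v₁ + q s₁ := by rw [← map_add, hx₁]
    rw [h1, hqzero v₁ hv₁, zero_add]
  obtain ⟨g, hg⟩ := LinearMap.exists_rightInverse_of_surjective φ.rangeRestrict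
    (LinearMap.range_rangeRestrict φ)
  have hgap : ∀ y : LinearMap.range φ, φ.rangeRestrict (g y) = y := by
    intro y
    have := congrArg (fun f => f y) hg
    exact this
  set J : X →ₗ[ℝ] X :=
    S.subtype.comp (g.comp (q.codRestrict (LinearMap.range φ) hsurj)) with hJdef
  have hJx : ∀ x : X, J x = ((g ⟨q x, hsurj x⟩ : S) : X) := fun _ => rfl
  have hJS : ∀ x : X, J x ∈ S := fun x => Submodule.coe_mem _
  have hqJ : ∀ x : X, q (J x) = q x := by
    intro x
    rw [hJx]
    have h1 : q ((g ⟨q x, hsurj x⟩ : S) : X) = φ (g ⟨q x, hsurj x⟩) := rfl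
    have h2 : φ (g ⟨q x, hsurj x⟩) = ((φ.rangeRestrict (g ⟨q x, hsurj x⟩) : X)) := rfl
    rw [h1, h2, hgap ⟨q x, hsurj x⟩]
  have hJV : ∀ x : X, x - J x ∈ V := by
    intro x
    have hq0 : q (x - J x) = 0 := by rw [map_sub, hqJ, sub_self]
    rw [hq] at hq0
    have h1 : x - J x = ((Submodule.orthogonalProjectionOnto V (x - J x) : V) : X) := by
      rw [← sub_eq_zero]; exact hq0
    rw [h1]; exact Submodule.coe_mem _
  have hJzero : ∀ x : X, x ∈ V → J x = 0 := by
    intro x hx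
    have h0 : (⟨q x, hsurj x⟩ : LinearMap.range φ) = 0 := by
      apply Subtype.ext; simpa using hqzero x hx
    rw [hJx, h0, map_zero]
    simp
  -- the idempotent B and its complement A
  set B : X →ₗ[ℝ] X := (LinearMap.id - T).comp (LinearMap.id - J) with hBdef
  have hB : ∀ x : X, B x = (x - J x) - T (x - J x) := fun _ => rfl
  have hBv : ∀ x : X, x ∈ V → B x = x - T x := by
    intro x hx; rw [hB, hJzero x hx, sub_zero]
  have hBs : ∀ x : X, x ∈ S → B x = 0 := by
    intro x hx
    have hw : x - J x ∈ V := hJV x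
    have hwS : x - J x ∈ S := Submodule.sub_mem S hx (hJS x)
    rw [hB, hTfix _ hwS hw, sub_self]
  have hBB : ∀ x : X, B (B x) = B x := by
    intro x
    have hw : x - J x ∈ V := hJV x
    rw [hB x, map_sub, hBv _ hw, hBs _ (hTS _), sub_zero, ← hB x]
  -- Cqopt ≥ 1
  have hvex : ∃ v : V, (v : X) ∉ (S : Set X) := by
    by_contra h
    push_neg at h
    have hall : ∀ C : ℝ, C ∈ {C : ℝ | ∀ v : V,
        ‖(v : X) - (P v : X)‖ ≤ C * Metric.infDist (v : X) (S : Set X)} := by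
      intro C v
      have hvS : (v : X) ∈ S := h v
      have h1 : T (v : X) = (v : X) := hTfix _ hvS (Submodule.coe_mem v)
      have h2 : ((P v : S) : X) = (v : X) := by rw [← hTV]; exact h1
      rw [h2, sub_self, norm_zero, Metric.infDist_zero_of_mem hvS, mul_zero]
    have := CqLB (hall (Cqopt - 1))
    linarith
  obtain ⟨v₀, hv₀⟩ := hvex
  have hSclosed : IsClosed (S : Set X) := S.closed_of_finiteDimensional
  have hSnonempty : (S : Set X).Nonempty := ⟨0, Submodule.zero_mem S⟩
  have hd₀ : 0 < Metric.infDist (v₀ : X) (S : Set X) := by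
    rcases lt_or_eq_of_le (Metric.infDist_nonneg (x := (v₀ : X)) (s := (S : Set X))) with h | h
    · exact h
    · exfalso
      have h1 : (v₀ : X) ∈ closure (S : Set X) :=
        (Metric.mem_closure_iff_infDist_zero hSnonempty).2 h.symm
      rw [hSclosed.closure_eq] at h1
      exact hv₀ h1
  have hlow : Metric.infDist (v₀ : X) (S : Set X) ≤ ‖(v₀ : X) - (P v₀ : X)‖ := by
    have h1 := Metric.infDist_le_dist_of_mem (x := (v₀ : X)) (Submodule.coe_mem (P v₀))
    rwa [dist_eq_norm] at h1
  have hCq1 : 1 ≤ Cqopt := by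
    have h1 := CqMem v₀
    have h2 : Metric.infDist (v₀ : X) (S : Set X) ≤
        Cqopt * Metric.infDist (v₀ : X) (S : Set X) := le_trans hlow h1
    exact (le_mul_iff_one_le_left hd₀).1 h2
  have hCq0 : 0 ≤ Cqopt := le_trans zero_le_one hCq1
  -- bound on B by Cqopt
  have hBbound : ∀ x : X, ‖B x‖ ≤ Cqopt * ‖x‖ := by
    intro x
    have hw : x - J x ∈ V := hJV x
    have h1 := CqMem ⟨x - J x, hw⟩
    have hBx : B x = ((⟨x - J x, hw⟩ : V) : X) - ((P ⟨x - J x, hw⟩ : S) : X) := by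
      rw [hB]
      congr 1
      exact hTV ⟨x - J x, hw⟩
    have hinf : Metric.infDist ((⟨x - J x, hw⟩ : V) : X) (S : Set X) ≤ ‖x‖ := by
      have hmem : -(J x) ∈ (S : Set X) := Submodule.neg_mem S (hJS x)
      have h2 := Metric.infDist_le_dist_of_mem (x := x - J x) hmem
      rw [dist_eq_norm, sub_neg_eq_add, sub_add_cancel] at h2
      exact h2
    calc ‖B x‖ ≤ Cqopt * Metric.infDist ((⟨x - J x, hw⟩ : V) : X) (S : Set X) := by
          rw [hBx]; exact h1
      _ ≤ Cqopt * ‖x‖ := mul_le_mul_of_nonneg_left hinf hCq0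
  have hAbound : ∀ x : X, ‖x - B x‖ ≤ Cqopt * ‖x‖ :=
    kato_idempotent_bound B Cqopt hCq1 hBB hBbound
  set A : X →ₗ[ℝ] X := LinearMap.id - B with hAdef
  have hA : ∀ x : X, A x = x - B x := fun _ => rfl
  have hAS : ∀ x : X, x ∈ S → A x = x := by
    intro x hx; rw [hA, hBs x hx, sub_zero]
  have hAV : ∀ x : X, x ∈ V → A x = T x := by
    intro x hx; rw [hA, hBv x hx, sub_sub_cancel]
  have hAA : ∀ x : X, A (A x) = A x := by
    intro x
    have hBA : B (A x) = 0 := by rw [hA, map_sub, hBB, sub_self]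
    rw [hA (A x), hBA, sub_zero]
  have hAb : ∀ x : X, ‖A x‖ ≤ Cqopt * ‖x‖ := by
    intro x; rw [hA]; exact hAbound x
  -- key identity: A (s - Π_V s) = s - P (Π_V s)
  have hAz : ∀ s : S, A ((s : X) - ((Submodule.orthogonalProjectionOnto V (s : X) : V) : X)) =
      (s : X) - ((P (Submodule.orthogonalProjectionOnto V (s : X)) : S) : X) := by
    intro s
    rw [map_sub, hAS _ (Submodule.coe_mem s),
      hAV _ (Submodule.coe_mem (Submodule.orthogonalProjectionOnto V (s : X))), hT,
      Submodule.orthogonalProjectionOnto_mem_subspace_eq_self]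
  -- duality: the inner sSup equals the norm of s - P (Π_V s)
  have hsSup : ∀ s : S,
      sSup {r : ℝ | ∃ σ : S, σ ≠ 0 ∧
          r = (b s σ - ⟪((Submodule.orthogonalProjectionOnto V (s : X) : X)), ((E σ : V) : X)⟫) /
              sSup {c : ℝ | ∃ s' : S, ‖s'‖ = 1 ∧ c = b s' σ}} =
        ‖(s : X) - ((P (Submodule.orthogonalProjectionOnto V (s : X)) : S) : X)‖ := by
    intro s
    set u : S := s - P (Submodule.orthogonalProjectionOnto V (s : X)) with hudef
    have hnum : ∀ σ : S,
        b s σ - ⟪((Submodule.orthogonalProjectionOnto V (s : X) : X)), ((E σ : V) : X)⟫ = b u σ := by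
      intro σ
      rw [hudef, map_sub, LinearMap.sub_apply, hP (Submodule.orthogonalProjectionOnto V (s : X)) σ]
    have hucoe : ((u : S) : X) = (s : X) - ((P (Submodule.orthogonalProjectionOnto V (s : X)) : S) : X) := by
      rw [hudef]; push_cast; ring_nf
    -- b is injective, hence bijective, onto the dual; same for its flip
    have hbinj : Function.Injective b := by
      intro a a' h
      have h1 : a - a' = 0 :=
        hb _ (fun σ => by rw [map_sub, LinearMap.sub_apply, h, sub_self])
      exact sub_eq_zero.1 h1
    have hrank : Module.finrank ℝ S = Module.finrank ℝ (Module.Dual ℝ S) :=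
      (Subspace.dual_finrank_eq).symm
    have hbsurj : Function.Surjective b :=
      (LinearMap.injective_iff_surjective_of_finrank_eq_finrank hrank).1 hbinj
    have hflipinj : Function.Injective b.flip := by
      intro σ σ' h
      have hz : b.flip (σ - σ') = 0 := by rw [map_sub, h, sub_self]
      have hzz : σ - σ' = 0 := by
        by_contra hne
        obtain ⟨f, hf⟩ : ∃ f : Module.Dual ℝ S, f (σ - σ') ≠ 0 := by
          by_contra hno
          push_neg at hno
          exact hne ((Module.forall_dual_apply_eq_zero_iff ℝ _).1 hno)
        obtain ⟨s₂, hs₂⟩ := hbsurj f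
        apply hf
        rw [← hs₂]
        have h2 : b s₂ (σ - σ') = b.flip (σ - σ') s₂ := rfl
        rw [h2, hz, LinearMap.zero_apply]
      exact sub_eq_zero.1 hzz
    have hflipsurj : Function.Surjective b.flip :=
      (LinearMap.injective_iff_surjective_of_finrank_eq_finrank hrank).1 hflipinj
    -- the denominator sets are bounded above
    have hcBdd : ∀ σ : S, BddAbove {c : ℝ | ∃ s' : S, ‖s'‖ = 1 ∧ c = b s' σ} := by
      intro σ
      refine ⟨‖LinearMap.toContinuousLinearMap (b.flip σ)‖, ?_⟩
      rintro c ⟨s', hs', rfl⟩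
      have h1 : b s' σ = (LinearMap.toContinuousLinearMap (b.flip σ)) s' := by simp
      rw [h1]
      calc (LinearMap.toContinuousLinearMap (b.flip σ)) s'
          ≤ ‖(LinearMap.toContinuousLinearMap (b.flip σ)) s'‖ := le_abs_self _
        _ ≤ ‖LinearMap.toContinuousLinearMap (b.flip σ)‖ * ‖s'‖ :=
            ContinuousLinearMap.le_opNorm _ _
        _ = ‖LinearMap.toContinuousLinearMap (b.flip σ)‖ := by rw [hs', mul_one]
    -- positivity of the denominator for σ ≠ 0
    have hDpos : ∀ σ : S, σ ≠ 0 → 0 < sSup {c : ℝ | ∃ s' : S, ‖s'‖ = 1 ∧ c = b s' σ} := by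
      intro σ hσ
      have hfne : b.flip σ ≠ 0 := fun h => hσ (hflipinj (by rw [h, map_zero]))
      obtain ⟨s₂, hs₂⟩ := DFunLike.ne_iff.1 hfne
      rw [LinearMap.zero_apply] at hs₂
      have hs₂ne : s₂ ≠ 0 := by
        intro h; apply hs₂; rw [h, map_zero]
      have hn2 : 0 < ‖s₂‖ := norm_pos_iff.2 hs₂ne
      have hval : b.flip σ s₂ = b s₂ σ := rfl
      rw [hval] at hs₂
      rcases lt_or_gt_of_ne hs₂ with hlt | hgt
      · have hunit : ‖(-(‖s₂‖⁻¹ • s₂) : S)‖ = 1 := by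
          rw [norm_neg, norm_smul, Real.norm_eq_abs, abs_inv, abs_of_pos hn2]
          exact inv_mul_cancel₀ (ne_of_gt hn2)
        have hmem : ‖s₂‖⁻¹ * (-(b s₂ σ)) ∈ {c : ℝ | ∃ s' : S, ‖s'‖ = 1 ∧ c = b s' σ} := by
          refine ⟨-(‖s₂‖⁻¹ • s₂), hunit, ?_⟩
          rw [map_neg, LinearMap.neg_apply, LinearMap.map_smul₂, smul_eq_mul]
          ring
        have hle := le_csSup (hcBdd σ) hmem
        have hposval : 0 < ‖s₂‖⁻¹ * (-(b s₂ σ)) := by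
          apply mul_pos (inv_pos.2 hn2); linarith
        linarith
      · have hunit : ‖((‖s₂‖⁻¹ • s₂) : S)‖ = 1 := by
          rw [norm_smul, Real.norm_eq_abs, abs_inv, abs_of_pos hn2]
          exact inv_mul_cancel₀ (ne_of_gt hn2)
        have hmem : ‖s₂‖⁻¹ * (b s₂ σ) ∈ {c : ℝ | ∃ s' : S, ‖s'‖ = 1 ∧ c = b s' σ} := by
          refine ⟨‖s₂‖⁻¹ • s₂, hunit, ?_⟩
          rw [LinearMap.map_smul₂, smul_eq_mul]
        have hle := le_csSup (hcBdd σ) hmem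
        have hposval : 0 < ‖s₂‖⁻¹ * (b s₂ σ) := mul_pos (inv_pos.2 hn2) hgt
        linarith
    -- a nonzero element of S
    obtain ⟨y₀, hy₀S, hy₀ne⟩ := (Submodule.ne_bot_iff S).1 hSne
    have he₀ : (⟨y₀, hy₀S⟩ : S) ≠ 0 := by
      intro h
      apply hy₀ne
      simpa using congrArg Subtype.val h
    by_cases hu0 : u = 0
    · -- degenerate case: the ratio set is {0}
      have hset : {r : ℝ | ∃ σ : S, σ ≠ 0 ∧
          r = (b s σ - ⟪((Submodule.orthogonalProjectionOnto V (s : X) : X)), ((E σ : V) : X)⟫) /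
              sSup {c : ℝ | ∃ s' : S, ‖s'‖ = 1 ∧ c = b s' σ}} = {0} := by
        ext r
        simp only [Set.mem_setOf_eq, Set.mem_singleton_iff]
        constructor
        · rintro ⟨σ, hσ, rfl⟩
          rw [hnum σ, hu0, map_zero, LinearMap.zero_apply, zero_div]
        · rintro rfl
          refine ⟨⟨y₀, hy₀S⟩, he₀, ?_⟩
          rw [hnum _, hu0, map_zero, LinearMap.zero_apply, zero_div]
      have hz2 : (s : X) - ((P (Submodule.orthogonalProjectionOnto V (s : X)) : S) : X) = 0 := by
        rw [← hucoe, hu0, Submodule.coe_zero]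
      rw [hset, csSup_singleton, hz2, norm_zero]
    · -- nondegenerate case
      have hupos : 0 < ‖u‖ := norm_pos_iff.2 hu0
      obtain ⟨σstar, hσstar⟩ := hflipsurj (innerₗ S u)
      have hbσ : ∀ s' : S, b s' σstar = ⟪u, s'⟫ := by
        intro s'
        have h1 : b s' σstar = (b.flip σstar) s' := rfl
        rw [h1, hσstar]
        rfl
      have hσne : σstar ≠ 0 := by
        intro h
        apply hu0
        have h1 : b u σstar = 0 := by rw [h, map_zero]
        rw [hbσ u] at h1
        exact inner_self_eq_zero.1 h1
      have hDstar : sSup {c : ℝ | ∃ s' : S, ‖s'‖ = 1 ∧ c = b s' σstar} = ‖u‖ := by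
        apply IsGreatest.csSup_eq
        constructor
        · refine ⟨‖u‖⁻¹ • u, ?_, ?_⟩
          · rw [norm_smul, Real.norm_eq_abs, abs_inv, abs_of_pos hupos]
            exact inv_mul_cancel₀ (ne_of_gt hupos)
          · rw [hbσ, real_inner_smul_right, real_inner_self_eq_norm_mul_norm]
            field_simp
        · rintro c ⟨s', hs', rfl⟩
          rw [hbσ]
          calc ⟪u, s'⟫ ≤ ‖u‖ * ‖s'‖ := real_inner_le_norm u s'
            _ = ‖u‖ := by rw [hs', mul_one]
      have hub : ∀ r ∈ {r : ℝ | ∃ σ : S, σ ≠ 0 ∧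
          r = (b s σ - ⟪((Submodule.orthogonalProjectionOnto V (s : X) : X)), ((E σ : V) : X)⟫) /
              sSup {c : ℝ | ∃ s' : S, ‖s'‖ = 1 ∧ c = b s' σ}}, r ≤ ‖u‖ := by
        rintro r ⟨σ, hσ, rfl⟩
        rw [hnum σ, div_le_iff₀ (hDpos σ hσ)]
        have hunit : ‖((‖u‖⁻¹ • u) : S)‖ = 1 := by
          rw [norm_smul, Real.norm_eq_abs, abs_inv, abs_of_pos hupos]
          exact inv_mul_cancel₀ (ne_of_gt hupos)
        have hmem : ‖u‖⁻¹ * (b u σ) ∈ {c : ℝ | ∃ s' : S, ‖s'‖ = 1 ∧ c = b s' σ} := by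
          refine ⟨‖u‖⁻¹ • u, hunit, ?_⟩
          rw [LinearMap.map_smul₂, smul_eq_mul]
        have hle := le_csSup (hcBdd σ) hmem
        calc b u σ = ‖u‖ * (‖u‖⁻¹ * b u σ) := (mul_inv_cancel_left₀ (ne_of_gt hupos) _).symm
          _ ≤ ‖u‖ * sSup {c : ℝ | ∃ s' : S, ‖s'‖ = 1 ∧ c = b s' σ} :=
              mul_le_mul_of_nonneg_left hle (le_of_lt hupos)
      have hmemstar : ‖u‖ ∈ {r : ℝ | ∃ σ : S, σ ≠ 0 ∧
          r = (b s σ - ⟪((Submodule.orthogonalProjectionOnto V (s : X) : X)), ((E σ : V) : X)⟫) /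
              sSup {c : ℝ | ∃ s' : S, ‖s'‖ = 1 ∧ c = b s' σ}} := by
        refine ⟨σstar, hσne, ?_⟩
        rw [hnum σstar, hDstar, hbσ u, real_inner_self_eq_norm_mul_norm]
        field_simp
      rw [IsGreatest.csSup_eq ⟨hmemstar, hub⟩]
      rw [← hucoe]
      exact (Submodule.coe_norm u).symm
  -- the set D and δS
  set Dset : Set ℝ := {d : ℝ | 0 ≤ d ∧ ∀ s : S,
      sSup {r : ℝ | ∃ σ : S, σ ≠ 0 ∧
        r = (b s σ - ⟪((Submodule.orthogonalProjectionOnto V (s : X) : X)), ((E σ : V) : X)⟫) /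
            sSup {c : ℝ | ∃ s' : S, ‖s'‖ = 1 ∧ c = b s' σ}} ≤
        d * ‖(s : X) - (Submodule.orthogonalProjectionOnto V (s : X) : X)‖} with hDdef
  have hDiff : ∀ d : ℝ, d ∈ Dset ↔ (0 ≤ d ∧ ∀ s : S,
      ‖(s : X) - ((P (Submodule.orthogonalProjectionOnto V (s : X)) : S) : X)‖ ≤
        d * ‖(s : X) - (Submodule.orthogonalProjectionOnto V (s : X) : X)‖) := by
    intro d
    constructor
    · rintro ⟨h0, h1⟩
      exact ⟨h0, fun s => by rw [← hsSup s]; exact h1 s⟩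
    · rintro ⟨h0, h1⟩
      exact ⟨h0, fun s => by rw [hsSup s]; exact h1 s⟩
  have hCqD : Cqopt ∈ Dset := by
    refine (hDiff Cqopt).2 ⟨hCq0, fun s => ?_⟩
    rw [← hAz s]
    exact hAb _
  have hDbdd : BddBelow Dset := ⟨0, fun d hd => hd.1⟩
  have hDne : Dset.Nonempty := ⟨Cqopt, hCqD⟩
  have hDclosed : IsClosed Dset := by
    have hde : Dset = {d : ℝ | 0 ≤ d} ∩ ⋂ s : S, {d : ℝ |
        sSup {r : ℝ | ∃ σ : S, σ ≠ 0 ∧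
          r = (b s σ - ⟪((Submodule.orthogonalProjectionOnto V (s : X) : X)), ((E σ : V) : X)⟫) /
              sSup {c : ℝ | ∃ s' : S, ‖s'‖ = 1 ∧ c = b s' σ}} ≤
          d * ‖(s : X) - (Submodule.orthogonalProjectionOnto V (s : X) : X)‖} := by
      ext d
      simp only [hDdef, Set.mem_setOf_eq, Set.mem_inter_iff, Set.mem_iInter]
    rw [hde]
    refine IsClosed.inter ?_ ?_
    · exact isClosed_le continuous_const continuous_id
    · exact isClosed_iInter fun s => isClosed_le continuous_const (continuous_id.mul continuous_const)
  set δS : ℝ := sInf Dset with hδSdef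
  have hδSmem : δS ∈ Dset := hDclosed.csInf_mem hDne hDbdd
  have hδleast : IsLeast Dset δS := ⟨hδSmem, fun d hd => csInf_le hDbdd hd⟩
  have hδCq : δS ≤ Cqopt := csInf_le hDbdd hCqD
  have hδ0 : 0 ≤ δS := hδSmem.1
  have hδpt : ∀ s : S, ‖(s : X) - ((P (Submodule.orthogonalProjectionOnto V (s : X)) : S) : X)‖ ≤
      δS * ‖(s : X) - (Submodule.orthogonalProjectionOnto V (s : X) : X)‖ := ((hDiff δS).1 hδSmem).2
  -- Cstab ≤ Cqopt
  have helem : ∀ r ∈ {r : ℝ | ∃ v : V, ‖(v : X)‖ = 1 ∧ r = ‖(P v : X)‖}, r ≤ Cqopt := by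
    rintro r ⟨v, hv1, rfl⟩
    have h1 : ((P v : S) : X) = A (v : X) := by
      rw [hAV _ (Submodule.coe_mem v), hTV]
    rw [h1]
    calc ‖A (v : X)‖ ≤ Cqopt * ‖(v : X)‖ := hAb _
      _ = Cqopt := by rw [hv1, mul_one]
  have hCstabCq : Cstab ≤ Cqopt := by
    rw [hCstab]; exact Real.sSup_le helem hCq0
  have hCbdd : BddAbove {r : ℝ | ∃ v : V, ‖(v : X)‖ = 1 ∧ r = ‖(P v : X)‖} :=
    ⟨Cqopt, fun r hr => helem r hr⟩
  -- pointwise stability bound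
  have hCstab_pt : ∀ v : V, ‖(P v : X)‖ ≤ Cstab * ‖(v : X)‖ := by
    intro v
    by_cases hv : v = 0
    · rw [hv, map_zero]
      simp
    · have hvne : (v : X) ≠ 0 := fun h => hv (Subtype.ext h)
      have hc : 0 < ‖(v : X)‖ := norm_pos_iff.2 hvne
      have hunit : ‖((‖(v : X)‖⁻¹ • v : V) : X)‖ = 1 := by
        rw [Submodule.coe_smul, norm_smul, Real.norm_eq_abs, abs_inv, abs_of_pos hc]
        exact inv_mul_cancel₀ (ne_of_gt hc)
      have hmem : ‖(v : X)‖⁻¹ * ‖(P v : X)‖ ∈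
          {r : ℝ | ∃ v : V, ‖(v : X)‖ = 1 ∧ r = ‖(P v : X)‖} := by
        refine ⟨‖(v : X)‖⁻¹ • v, hunit, ?_⟩
        rw [map_smul, Submodule.coe_smul, norm_smul, Real.norm_eq_abs, abs_inv, abs_of_pos hc]
      have h1 := le_csSup hCbdd hmem
      rw [← hCstab] at h1
      calc ‖(P v : X)‖ = ‖(v : X)‖ * (‖(v : X)‖⁻¹ * ‖(P v : X)‖) :=
            (mul_inv_cancel_left₀ (ne_of_gt hc) _).symm
        _ ≤ ‖(v : X)‖ * Cstab := mul_le_mul_of_nonneg_left h1 (le_of_lt hc)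
        _ = Cstab * ‖(v : X)‖ := mul_comm _ _
  have hCstab0 : 0 ≤ Cstab := by
    have hvne : (v₀ : X) ≠ 0 := by
      intro h
      apply hv₀; rw [h]; exact Submodule.zero_mem S
    have hc : 0 < ‖(v₀ : X)‖ := norm_pos_iff.2 hvne
    have hunit : ‖((‖(v₀ : X)‖⁻¹ • v₀ : V) : X)‖ = 1 := by
      rw [Submodule.coe_smul, norm_smul, Real.norm_eq_abs, abs_inv, abs_of_pos hc]
      exact inv_mul_cancel₀ (ne_of_gt hc)
    have hmem : ‖((P (‖(v₀ : X)‖⁻¹ • v₀) : S) : X)‖ ∈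
        {r : ℝ | ∃ v : V, ‖(v : X)‖ = 1 ∧ r = ‖(P v : X)‖} := ⟨_, hunit, rfl⟩
    have h1 := le_csSup hCbdd hmem
    rw [← hCstab] at h1
    exact le_trans (norm_nonneg _) h1
  -- the combined bound on A
  set N : ℝ := Real.sqrt (Cstab ^ 2 + δS ^ 2) with hNdef
  have hN0 : 0 ≤ N := Real.sqrt_nonneg _
  have hNsq : N ^ 2 = Cstab ^ 2 + δS ^ 2 := Real.sq_sqrt (by positivity)
  have hAN : ∀ x : X, ‖A x‖ ≤ N * ‖x‖ := by
    intro x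
    set pp : X := ((Submodule.orthogonalProjectionOnto V x : V) : X) with hppdef
    have hzorth : x - pp ∈ Vᗮ := Submodule.sub_starProjection_mem_orthogonal (K := V) x
    have hxtop : x ∈ V ⊔ S := by rw [hsum]; trivial
    obtain ⟨v₁, hv₁, s₁, hs₁, hx₁⟩ := Submodule.mem_sup.1 hxtop
    have hproj1 : ((Submodule.orthogonalProjectionOnto V v₁ : V) : X) = v₁ :=
      Submodule.starProjection_eq_self_iff.2 hv₁
    have h1 : pp = v₁ + ((Submodule.orthogonalProjectionOnto V s₁ : V) : X) := by
      rw [hppdef, ← hx₁, map_add]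
      push_cast
      rw [hproj1]
    have hz : x - pp = s₁ - ((Submodule.orthogonalProjectionOnto V s₁ : V) : X) := by
      rw [h1, ← hx₁]; abel
    have hAz1 : ‖A (x - pp)‖ ≤ δS * ‖x - pp‖ := by
      rw [hz]
      rw [show A (s₁ - ((Submodule.orthogonalProjectionOnto V s₁ : V) : X))
          = s₁ - ((P (Submodule.orthogonalProjectionOnto V s₁) : S) : X) from hAz ⟨s₁, hs₁⟩]
      exact hδpt ⟨s₁, hs₁⟩
    have hAp : ‖A pp‖ ≤ Cstab * ‖pp‖ := by
      have h2 : A pp = T pp := hAV _ (Submodule.coe_mem _)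
      have h3 : T pp = ((P (Submodule.orthogonalProjectionOnto V x) : S) : X) := by
        rw [hT, hppdef, Submodule.orthogonalProjectionOnto_mem_subspace_eq_self]
      rw [h2, h3, hppdef]
      exact hCstab_pt _
    have hxpz : x = pp + (x - pp) := by abel
    have horth : ⟪pp, x - pp⟫ = 0 :=
      Submodule.inner_right_of_mem_orthogonal (Submodule.coe_mem _) hzorth
    have hpyth : ‖x‖ ^ 2 = ‖pp‖ ^ 2 + ‖x - pp‖ ^ 2 := by
      calc ‖x‖ ^ 2 = ‖pp + (x - pp)‖ ^ 2 := by rw [← hxpz]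
        _ = ‖pp‖ ^ 2 + 2 * ⟪pp, x - pp⟫ + ‖x - pp‖ ^ 2 := norm_add_sq_real _ _
        _ = ‖pp‖ ^ 2 + ‖x - pp‖ ^ 2 := by rw [horth]; ring
    have htri : ‖A x‖ ≤ Cstab * ‖pp‖ + δS * ‖x - pp‖ := by
      calc ‖A x‖ = ‖A pp + A (x - pp)‖ := by rw [← map_add, ← hxpz]
        _ ≤ ‖A pp‖ + ‖A (x - pp)‖ := norm_add_le _ _
        _ ≤ Cstab * ‖pp‖ + δS * ‖x - pp‖ := add_le_add hAp hAz1
    have hfin : Cstab * ‖pp‖ + δS * ‖x - pp‖ ≤ N * ‖x‖ := by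
      have hsq2 : (Cstab * ‖pp‖ + δS * ‖x - pp‖) ^ 2 ≤ (N * ‖x‖) ^ 2 := by
        rw [mul_pow, hNsq]
        nlinarith [sq_nonneg (Cstab * ‖x - pp‖ - δS * ‖pp‖), hpyth, norm_nonneg pp,
          norm_nonneg (x - pp), hCstab0, hδ0]
      have hL : 0 ≤ Cstab * ‖pp‖ + δS * ‖x - pp‖ := by positivity
      have hR : 0 ≤ N * ‖x‖ := by positivity
      calc Cstab * ‖pp‖ + δS * ‖x - pp‖
          = Real.sqrt ((Cstab * ‖pp‖ + δS * ‖x - pp‖) ^ 2) := (Real.sqrt_sq hL).symm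
        _ ≤ Real.sqrt ((N * ‖x‖) ^ 2) := Real.sqrt_le_sqrt hsq2
        _ = N * ‖x‖ := Real.sqrt_sq hR
    exact le_trans htri hfin
  -- N ≥ 1
  obtain ⟨s₀, hs₀S, hs₀ne⟩ := (Submodule.ne_bot_iff S).1 hSne
  have hN1 : 1 ≤ N := by
    have h1 : ‖s₀‖ ≤ N * ‖s₀‖ := by
      have h2 := hAN s₀
      rwa [hAS s₀ hs₀S] at h2
    have h2 : 0 < ‖s₀‖ := norm_pos_iff.2 hs₀ne
    exact (le_mul_iff_one_le_left h2).1 h1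
  -- Kato applied to A gives the bound on B by N
  have hBN : ∀ x : X, ‖B x‖ ≤ N * ‖x‖ := by
    intro x
    have h1 := kato_idempotent_bound A N hN1 hAA hAN x
    have h2 : x - A x = B x := by rw [hA, sub_sub_cancel]
    rwa [h2] at h1
  -- N is in the quasi-optimality set
  haveI : Nonempty (S : Set X) := ⟨⟨0, Submodule.zero_mem S⟩⟩
  have hNmem : ∀ v : V, ‖(v : X) - (P v : X)‖ ≤ N * Metric.infDist (v : X) (S : Set X) := by
    intro v
    have hBveq : B (v : X) = (v : X) - ((P v : S) : X) := by
      rw [hBv _ (Submodule.coe_mem v), hTV]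
    have hNpos : 0 < N := lt_of_lt_of_le zero_lt_one hN1
    have hle : ∀ y : (S : Set X), ‖B (v : X)‖ / N ≤ dist (v : X) (y : X) := by
      intro y
      have h1 : B (v : X) = B ((v : X) - (y : X)) := by
        rw [map_sub, hBs _ y.2, sub_zero]
      have h2 : ‖B ((v : X) - (y : X))‖ ≤ N * ‖(v : X) - (y : X)‖ := hBN _
      rw [div_le_iff₀ hNpos, dist_eq_norm, mul_comm, h1]
      exact h2
    have hinf : ‖B (v : X)‖ / N ≤ Metric.infDist (v : X) (S : Set X) := by
      rw [Metric.infDist_eq_iInf]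
      exact le_ciInf hle
    have h3 := mul_le_mul_of_nonneg_left hinf hN0
    rw [mul_div_cancel₀ _ (ne_of_gt hNpos)] at h3
    rwa [hBveq] at h3
  have hCqN : Cqopt ≤ N := CqLB hNmem
  exact ⟨δS, hδleast, max_le hCstabCq hδCq, hCqN⟩
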